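/- arXiv:1511.03762 — 2 statements merged into one kernel-verified Lean document; each statement's English description precedes it below -/
import Mathlib

section
/- Fix integers L ≥ 1 and N ≥ 2 and p, q ∈ ℂ with p + q = 1. Suppose ξ = (ξ_1, …, ξ_N) ∈ ℂ^N has all coordinates nonzero, satisfies p + q ξ_a ξ_b − ξ_b ≠ 0 for all a ≠ b, and is a solution of the Bethe ansatz equations: for every j, ξ_j^L = (−1)^{N−1} ∏_{i=1}^N (p + q ξ_j ξ_i − ξ_j)/(p + q ξ_j ξ_i − ξ_i), where all denominators p + q ξ_j ξ_i − ξ_i are nonzero. Then the Bethe ansatz function u_ξ vanishes identically on ℤ^N (i.e. u_ξ(x) = 0 for all x ∈ ℤ^N) if and only if ξ_i = ξ_j for two distinct indices i and j. -/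
/-- The Bethe amplitude `A_σ(ξ)`: the product over all pairs `a < b` that are
inverted by `σ` (i.e. `σ⁻¹ b < σ⁻¹ a`) of `-(p + q ξ_a ξ_b - ξ_a)/(p + q ξ_a ξ_b - ξ_b)`. -/
noncomputable def betheAmp {N : ℕ} (p q : ℂ) (ξ : Fin N → ℂ)
    (σ : Equiv.Perm (Fin N)) : ℂ :=
  ∏ ab ∈ Finset.univ.filter
      (fun ab : Fin N × Fin N => ab.1 < ab.2 ∧ σ.symm ab.2 < σ.symm ab.1),
    (-((p + q * ξ ab.1 * ξ ab.2 - ξ ab.1) / (p + q * ξ ab.1 * ξ ab.2 - ξ ab.2)))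

/-- The Bethe ansatz function `u_ξ(x) = ∑_{σ ∈ S_N} A_σ(ξ) ∏_k ξ_{σ(k)}^{x_k}`. -/
noncomputable def betheU {N : ℕ} (p q : ℂ) (ξ : Fin N → ℂ) (x : Fin N → ℤ) : ℂ :=
  ∑ σ : Equiv.Perm (Fin N), betheAmp p q ξ σ * ∏ k, ξ (σ k) ^ x k

namespace BetheAux

open Finset Equiv

variable {N : ℕ}

/-- The elementary factor. -/
noncomputable def bf (p q : ℂ) (ξ : Fin N → ℂ) (a b : Fin N) : ℂ :=
  -((p + q * ξ a * ξ b - ξ a) / (p + q * ξ a * ξ b - ξ b))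

/-- The set of increasing pairs. -/
def PS (N : ℕ) : Finset (Fin N × Fin N) :=
  Finset.univ.filter (fun ab : Fin N × Fin N => ab.1 < ab.2)

lemma mem_PS {ab : Fin N × Fin N} : ab ∈ PS N ↔ ab.1 < ab.2 := by
  simp [PS]

/-- The "weight" of a pair: the factor if the pair is inverted, else 1. -/
noncomputable def bw (p q : ℂ) (ξ : Fin N → ℂ) (σ : Equiv.Perm (Fin N))
    (ab : Fin N × Fin N) : ℂ :=
  if σ.symm ab.2 < σ.symm ab.1 then bf p q ξ ab.1 ab.2 else 1

lemma amp_eq (p q : ℂ) (ξ : Fin N → ℂ) (σ : Equiv.Perm (Fin N)) :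
    betheAmp p q ξ σ = ∏ ab ∈ PS N, bw p q ξ σ ab := by
  rw [betheAmp, PS, ← Finset.filter_filter, Finset.prod_filter]
  rfl

/-- Sorted image of a pair under a permutation. -/
def sp (τ : Equiv.Perm (Fin N)) (ab : Fin N × Fin N) : Fin N × Fin N :=
  if τ ab.1 < τ ab.2 then (τ ab.1, τ ab.2) else (τ ab.2, τ ab.1)

lemma sp_mem (τ : Equiv.Perm (Fin N)) {ab : Fin N × Fin N} (h : ab ∈ PS N) :
    sp τ ab ∈ PS N := by
  rw [mem_PS] at h ⊢
  unfold sp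
  split_ifs with h1
  · exact h1
  · exact (not_lt.mp h1).lt_of_ne (τ.injective.ne h.ne')

lemma sp_sp (τ : Equiv.Perm (Fin N)) (hτ : ∀ x, τ (τ x) = x) {ab : Fin N × Fin N}
    (h : ab ∈ PS N) : sp τ (sp τ ab) = ab := by
  obtain ⟨a, b⟩ := ab
  rw [mem_PS] at h
  simp only [sp]
  by_cases h1 : τ a < τ b
  · rw [if_pos h1]
    simp only [hτ]
    rw [if_pos h]
  · rw [if_neg h1]
    simp only [hτ]
    rw [if_neg (asymm h)]

lemma prod_sp (τ : Equiv.Perm (Fin N)) (hτ : ∀ x, τ (τ x) = x)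
    (F : Fin N × Fin N → ℂ) :
    ∏ ab ∈ PS N, F ab = ∏ ab ∈ PS N, F (sp τ ab) := by
  refine Finset.prod_bij' (fun ab _ => sp τ ab) (fun ab _ => sp τ ab)
    (fun ab h => sp_mem τ h) (fun ab h => sp_mem τ h)
    (fun ab h => sp_sp τ hτ h) (fun ab h => sp_sp τ hτ h) (fun ab h => ?_)
  rw [sp_sp τ hτ h]

section Algebra

variable {p q : ℂ} {ξ : Fin N → ℂ}
variable (hpair : ∀ a b, a ≠ b → p + q * ξ a * ξ b - ξ b ≠ 0)

lemma bf_left {i j : Fin N} (hξ : ξ i = ξ j) (b : Fin N) :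
    bf p q ξ i b = bf p q ξ j b := by unfold bf; rw [hξ]

lemma bf_right {i j : Fin N} (hξ : ξ i = ξ j) (a : Fin N) :
    bf p q ξ a i = bf p q ξ a j := by unfold bf; rw [hξ]

include hpair

lemma bf_diag {i j : Fin N} (hij : i ≠ j) (hξ : ξ i = ξ j) :
    bf p q ξ i j = -1 := by
  have h : p + q * ξ i * ξ j - ξ i = p + q * ξ i * ξ j - ξ j := by rw [hξ]
  rw [bf, h, div_self (hpair i j hij)]

lemma bf_mul {i j : Fin N} (hξ : ξ i = ξ j) (b : Fin N) (hbi : i ≠ b) (hbj : b ≠ j) :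
    bf p q ξ i b * bf p q ξ b j = 1 := by
  have hB : p + q * ξ i * ξ b - ξ b ≠ 0 := hpair i b hbi
  have hD : p + q * ξ b * ξ j - ξ j ≠ 0 := hpair b j hbj
  have hA : p + q * ξ i * ξ b - ξ i = p + q * ξ b * ξ j - ξ j := by rw [hξ]; ring
  have hC : p + q * ξ b * ξ j - ξ b = p + q * ξ i * ξ b - ξ b := by rw [hξ]; ring
  rw [bf, bf, neg_mul_neg, hA, hC, div_mul_div_comm,
    mul_comm (p + q * ξ b * ξ j - ξ j)]
  exact div_self (mul_ne_zero hB hD)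

end Algebra

/-- The correction factor appearing when a permutation is multiplied by a swap. -/
noncomputable def be (p q : ℂ) (ξ : Fin N → ℂ) (i j : Fin N)
    (ab : Fin N × Fin N) : ℂ :=
  if ab.1 = i ∧ ab.2 = j then -1
  else if ab.1 = i ∧ ab.2 < j then bf p q ξ ab.2 j
  else if ab.2 = j ∧ i < ab.1 then bf p q ξ i ab.1
  else 1

section Main

variable {p q : ℂ} {ξ : Fin N → ℂ}
variable (hpair : ∀ a b, a ≠ b → p + q * ξ a * ξ b - ξ b ≠ 0)

include hpair

lemma bw_sp {i j : Fin N} (hij : i < j) (hξ : ξ i = ξ j) (σ : Equiv.Perm (Fin N))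
    {ab : Fin N × Fin N} (hab : ab ∈ PS N) :
    bw p q ξ (Equiv.swap i j * σ) (sp (Equiv.swap i j) ab) =
      bw p q ξ σ ab * be p q ξ i j ab := by
  obtain ⟨a, b⟩ := ab
  rw [mem_PS] at hab
  simp only at hab
  have hsymm : ∀ c, (Equiv.swap i j * σ).symm c = σ.symm (Equiv.swap i j c) := by
    intro c
    rw [Equiv.Perm.mul_def, Equiv.symm_trans_apply, Equiv.symm_swap]
  have hτi : Equiv.swap i j i = j := Equiv.swap_apply_left i j
  have hτj : Equiv.swap i j j = i := Equiv.swap_apply_right i j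
  have hτo : ∀ c, c ≠ i → c ≠ j → Equiv.swap i j c = c := fun c h1 h2 =>
    Equiv.swap_apply_of_ne_of_ne h1 h2
  have hne : ∀ u v : Fin N, u ≠ v → σ.symm u ≠ σ.symm v := fun u v h he =>
    h (σ.symm.injective he)
  have hw : ∀ c d : Fin N, bw p q ξ (Equiv.swap i j * σ) (c, d) =
      if σ.symm (Equiv.swap i j d) < σ.symm (Equiv.swap i j c)
      then bf p q ξ c d else 1 := by
    intro c d
    simp only [bw, hsymm]
  have hw0 : ∀ c d : Fin N, bw p q ξ σ (c, d) =
      if σ.symm d < σ.symm c then bf p q ξ c d else 1 := fun c d => rfl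
  by_cases hai : a = i
  · subst hai
    by_cases hbj : b = j
    · -- case (i, j) itself
      subst hbj
      have hsp : sp (Equiv.swap a b) (a, b) = (a, b) := by
        simp only [sp, hτi, hτj]
        rw [if_neg (asymm hab)]
      have hbe : be p q ξ a b (a, b) = -1 := by
        simp only [be]
        rw [if_pos ⟨trivial, trivial⟩]
      rw [hsp, hbe, hw, hw0, hτi, hτj, bf_diag hpair hab.ne hξ]
      rcases (hne a b hab.ne).lt_or_gt with h | h
      · rw [if_pos h, if_neg (asymm h)]; norm_num
      · rw [if_neg (asymm h), if_pos h]; norm_num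
    · have hbi : b ≠ a := hab.ne'
      by_cases hblt : b < j
      · -- case a = i, a < b < j
        have hsp : sp (Equiv.swap a j) (a, b) = (b, j) := by
          simp only [sp, hτi, hτo b hbi hbj]
          rw [if_neg (asymm hblt)]
        have hbe : be p q ξ a j (a, b) = bf p q ξ b j := by
          simp only [be]
          rw [if_neg (fun h => hbj h.2), if_pos ⟨trivial, hblt⟩]
        rw [hsp, hbe, hw, hw0, hτj, hτo b hbi hbj]
        rcases (hne a b hab.ne).lt_or_gt with h | h
        · rw [if_pos h, if_neg (asymm h), one_mul]
        · rw [if_neg (asymm h), if_pos h, bf_mul hpair hξ b hab.ne hbj]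
      · -- case a = i, j < b
        have hjb : j < b := (not_lt.mp hblt).lt_of_ne (fun h => hbj h.symm)
        have hsp : sp (Equiv.swap a j) (a, b) = (j, b) := by
          simp only [sp, hτi, hτo b hbi hbj]
          rw [if_pos hjb]
        have hbe : be p q ξ a j (a, b) = 1 := by
          simp only [be]
          rw [if_neg (fun h => hbj h.2), if_neg (fun h => hblt h.2),
            if_neg (fun h => hbj h.1)]
        rw [hsp, hbe, hw, hw0, hτj, hτo b hbi hbj, mul_one, bf_left hξ b]
  · by_cases hbj : b = j
    · subst hbj
      have haj : a ≠ b := hab.ne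
      by_cases hia : i < a
      · -- case i < a < b = j
        have hsp : sp (Equiv.swap i b) (a, b) = (i, a) := by
          simp only [sp, hτj, hτo a hai haj]
          rw [if_neg (asymm hia)]
        have hbe : be p q ξ i b (a, b) = bf p q ξ i a := by
          simp only [be]
          rw [if_neg (fun h => hai h.1), if_neg (fun h => hai h.1),
            if_pos ⟨trivial, hia⟩]
        rw [hsp, hbe, hw, hw0, hτi, hτo a hai haj]
        rcases (hne a b hab.ne).lt_or_gt with h | h
        · rw [if_pos h, if_neg (asymm h), one_mul]
        · rw [if_neg (asymm h), if_pos h, mul_comm, bf_mul hpair hξ a hia.ne haj]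
      · -- case a < i, b = j
        have hai' : a < i := (not_lt.mp hia).lt_of_ne hai
        have hsp : sp (Equiv.swap i b) (a, b) = (a, i) := by
          simp only [sp, hτj, hτo a hai haj]
          rw [if_pos hai']
        have hbe : be p q ξ i b (a, b) = 1 := by
          simp only [be]
          rw [if_neg (fun h => hai h.1), if_neg (fun h => hai h.1),
            if_neg (fun h => hia h.2)]
        rw [hsp, hbe, hw, hw0, hτi, hτo a hai haj, mul_one, bf_right hξ a]
    · by_cases hbi : b = i
      · -- case a < b = i < j
        subst hbi
        have hbj' : b ≠ j := hij.ne
        have haj : a ≠ j := (hab.trans hij).ne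
        have hsp : sp (Equiv.swap b j) (a, b) = (a, j) := by
          simp only [sp, hτi, hτo a hai haj]
          rw [if_pos (hab.trans hij)]
        have hbe : be p q ξ b j (a, b) = 1 := by
          simp only [be]
          rw [if_neg (fun h => hai h.1), if_neg (fun h => hai h.1),
            if_neg (fun h => hbj' h.1)]
        rw [hsp, hbe, hw, hw0, hτj, hτo a hai haj, mul_one, bf_right hξ a]
      · by_cases haj : a = j
        · -- case i < a = j < b
          subst haj
          have hbig : i < b := hij.trans hab
          have hsp : sp (Equiv.swap i a) (a, b) = (i, b) := by
            simp only [sp, hτj, hτo b hbi hbj]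
            rw [if_pos hbig]
          have hbe : be p q ξ i a (a, b) = 1 := by
            simp only [be]
            rw [if_neg (fun h => hai h.1), if_neg (fun h => hai h.1),
              if_neg (fun h => hbj h.1)]
          rw [hsp, hbe, hw, hw0, hτi, hτo b hbi hbj, mul_one, bf_left hξ b]
        · -- case a, b both outside {i, j}
          have hsp : sp (Equiv.swap i j) (a, b) = (a, b) := by
            simp only [sp, hτo a hai haj, hτo b hbi hbj]
            rw [if_pos hab]
          have hbe : be p q ξ i j (a, b) = 1 := by
            simp only [be]
            rw [if_neg (fun h => hai h.1), if_neg (fun h => hai h.1),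
              if_neg (fun h => hbj h.1)]
          rw [hsp, hbe, hw, hw0, hτo a hai haj, hτo b hbi hbj, mul_one]


lemma prod_be {i j : Fin N} (hij : i < j) (hξ : ξ i = ξ j) :
    ∏ ab ∈ PS N, be p q ξ i j ab = -1 := by
  have hmem : ((i, j) : Fin N × Fin N) ∈ PS N := mem_PS.mpr hij
  rw [← Finset.mul_prod_erase _ _ hmem]
  have h1 : be p q ξ i j (i, j) = -1 := by
    simp only [be]
    rw [if_pos ⟨trivial, trivial⟩]
  have h2 : ∏ ab ∈ (PS N).erase (i, j), be p q ξ i j ab = 1 := by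
    refine Finset.prod_involution
      (fun ab _ => if ab.1 = i ∧ ab.2 < j then (ab.2, j)
        else if ab.2 = j ∧ i < ab.1 then (i, ab.1) else ab) ?_ ?_ ?_ ?_
    · -- product of paired values is 1
      intro ab ha
      rw [Finset.mem_erase, mem_PS] at ha
      obtain ⟨hne', hab⟩ := ha
      by_cases h1 : ab.1 = i ∧ ab.2 < j
      · have hbne : ab.2 ≠ i := by
          intro h
          rw [h1.1, h] at hab
          exact lt_irrefl i hab
        have e1 : be p q ξ i j ab = bf p q ξ ab.2 j := by
          simp only [be]
          rw [if_neg (fun h => h1.2.ne h.2), if_pos h1]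
        have e2 : be p q ξ i j (ab.2, j) = bf p q ξ i ab.2 := by
          simp only [be]
          rw [if_neg (fun h => hbne h.1), if_neg (fun h => hbne h.1),
            if_pos ⟨trivial, h1.1 ▸ hab⟩]
        rw [if_pos h1, e1, e2, mul_comm]
        exact bf_mul hpair hξ ab.2 (Ne.symm hbne) h1.2.ne
      · by_cases h2 : ab.2 = j ∧ i < ab.1
        · have hanej : ab.1 ≠ j := (h2.1 ▸ hab).ne
          have e1 : be p q ξ i j ab = bf p q ξ i ab.1 := by
            simp only [be]
            rw [if_neg (fun h => h2.2.ne' h.1), if_neg (fun h => h2.2.ne' h.1),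
              if_pos h2]
          have e2 : be p q ξ i j (i, ab.1) = bf p q ξ ab.1 j := by
            simp only [be]
            rw [if_neg (fun h => hanej h.2), if_pos ⟨trivial, h2.1 ▸ hab⟩]
          rw [if_neg h1, if_pos h2, e1, e2]
          exact bf_mul hpair hξ ab.1 h2.2.ne hanej
        · have e1 : be p q ξ i j ab = 1 := by
            simp only [be]
            rw [if_neg (fun h => hne' (Prod.ext h.1 h.2)), if_neg h1, if_neg h2]
          rw [if_neg h1, if_neg h2, e1, one_mul]
    · -- no fixed point with value ≠ 1
      intro ab ha hval
      rw [Finset.mem_erase, mem_PS] at ha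
      obtain ⟨hne', hab⟩ := ha
      by_cases h1 : ab.1 = i ∧ ab.2 < j
      · rw [if_pos h1]
        intro hgeq
        exact absurd (congrArg Prod.fst hgeq) hab.ne'
      · by_cases h2 : ab.2 = j ∧ i < ab.1
        · rw [if_neg h1, if_pos h2]
          intro hgeq
          exact absurd (congrArg Prod.fst hgeq) h2.2.ne
        · exfalso
          apply hval
          simp only [be]
          rw [if_neg (fun h => hne' (Prod.ext h.1 h.2)), if_neg h1, if_neg h2]
    · -- the involution maps the set to itself
      intro ab ha
      rw [Finset.mem_erase, mem_PS] at ha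
      obtain ⟨hne', hab⟩ := ha
      by_cases h1 : ab.1 = i ∧ ab.2 < j
      · have hbne : ab.2 ≠ i := by
          intro h
          rw [h1.1, h] at hab
          exact lt_irrefl i hab
        rw [if_pos h1, Finset.mem_erase, mem_PS]
        exact ⟨fun h => hbne (congrArg Prod.fst h), h1.2⟩
      · by_cases h2 : ab.2 = j ∧ i < ab.1
        · have hanej : ab.1 ≠ j := (h2.1 ▸ hab).ne
          rw [if_neg h1, if_pos h2, Finset.mem_erase, mem_PS]
          exact ⟨fun h => hanej (congrArg Prod.snd h), h2.2⟩
        · rw [if_neg h1, if_neg h2, Finset.mem_erase, mem_PS]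
          exact ⟨hne', hab⟩
    · -- the involution is involutive
      intro ab ha
      rw [Finset.mem_erase, mem_PS] at ha
      obtain ⟨hne', hab⟩ := ha
      by_cases h1 : ab.1 = i ∧ ab.2 < j
      · have hilt : i < ab.2 := by rw [← h1.1]; exact hab
        rw [if_pos h1]
        dsimp only
        rw [if_neg (fun h => lt_irrefl j h.2), if_pos ⟨rfl, hilt⟩, ← h1.1]
      · by_cases h2 : ab.2 = j ∧ i < ab.1
        · have hlt : ab.1 < j := by rw [← h2.1]; exact hab
          rw [if_neg h1, if_pos h2]
          dsimp only
          rw [if_pos ⟨rfl, hlt⟩, ← h2.1]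
        · rw [if_neg h1, if_neg h2, if_neg h1, if_neg h2]
  rw [h1, h2, mul_one]

lemma amp_swap {i j : Fin N} (hij : i < j) (hξ : ξ i = ξ j) (σ : Equiv.Perm (Fin N)) :
    betheAmp p q ξ (Equiv.swap i j * σ) = - betheAmp p q ξ σ := by
  have hτ : ∀ x, Equiv.swap i j (Equiv.swap i j x) = x := fun x =>
    Equiv.swap_apply_self i j x
  rw [amp_eq, amp_eq, prod_sp (Equiv.swap i j) hτ (bw p q ξ (Equiv.swap i j * σ)),
    Finset.prod_congr rfl (fun ab hab => bw_sp hpair hij hξ σ hab),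
    Finset.prod_mul_distrib, prod_be hpair hij hξ]
  ring

lemma u_swap_zero {i j : Fin N} (hij : i < j) (hξ : ξ i = ξ j) (x : Fin N → ℤ) :
    betheU p q ξ x = 0 := by
  have hτval : ∀ c, ξ (Equiv.swap i j c) = ξ c := by
    intro c
    rcases eq_or_ne c i with rfl | h1
    · rw [Equiv.swap_apply_left]; exact hξ.symm
    · rcases eq_or_ne c j with rfl | h2
      · rw [Equiv.swap_apply_right]; exact hξ
      · rw [Equiv.swap_apply_of_ne_of_ne h1 h2]
  have key : betheU p q ξ x = - betheU p q ξ x := by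
    calc betheU p q ξ x
        = ∑ σ : Equiv.Perm (Fin N), betheAmp p q ξ (Equiv.swap i j * σ) *
            ∏ k, ξ ((Equiv.swap i j * σ) k) ^ x k :=
          (Fintype.sum_equiv (Equiv.mulLeft (Equiv.swap i j)) _ _ (fun σ => rfl)).symm
      _ = ∑ σ : Equiv.Perm (Fin N), -(betheAmp p q ξ σ * ∏ k, ξ (σ k) ^ x k) := by
          refine Finset.sum_congr rfl fun σ _ => ?_
          rw [amp_swap hpair hij hξ σ, neg_mul]
          congr 2
          refine Finset.prod_congr rfl fun k _ => ?_
          rw [Equiv.Perm.mul_apply, hτval]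
      _ = - betheU p q ξ x := by rw [betheU, Finset.sum_neg_distrib]
  linear_combination key / 2


end Main



lemma amp_one (p q : ℂ) (ξ : Fin N → ℂ) : betheAmp p q ξ 1 = 1 := by
  have hempty : (Finset.univ.filter
      (fun ab : Fin N × Fin N => ab.1 < ab.2 ∧ (1 : Equiv.Perm (Fin N)).symm ab.2 <
        (1 : Equiv.Perm (Fin N)).symm ab.1)) = ∅ := by
    refine Finset.filter_false_of_mem fun ab _ h => ?_
    exact absurd h.1 (asymm h.2)
  rw [betheAmp, hempty, Finset.prod_empty]

/-- The character of `ℤ^N` attached to a permutation. -/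
noncomputable def bchar (ξ : Fin N → ℂ) (hnz : ∀ i, ξ i ≠ 0) (σ : Equiv.Perm (Fin N)) :
    Multiplicative (Fin N → ℤ) →* ℂ where
  toFun m := ∏ k, ξ (σ k) ^ (Multiplicative.toAdd m k)
  map_one' := by simp
  map_mul' a b := by
    simp only [toAdd_mul, Pi.add_apply]
    rw [← Finset.prod_mul_distrib]
    exact Finset.prod_congr rfl fun k _ => zpow_add₀ (hnz _) _ _

lemma bchar_single (ξ : Fin N → ℂ) (hnz : ∀ i, ξ i ≠ 0) (σ : Equiv.Perm (Fin N))
    (k : Fin N) :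
    bchar ξ hnz σ (Multiplicative.ofAdd (Pi.single k 1)) = ξ (σ k) := by
  simp only [bchar, MonoidHom.coe_mk, OneHom.coe_mk, toAdd_ofAdd]
  rw [Finset.prod_eq_single k]
  · rw [Pi.single_eq_same, zpow_one]
  · intro m _ hm
    rw [Pi.single_eq_of_ne hm, zpow_zero]
  · intro hk
    exact absurd (Finset.mem_univ k) hk

lemma bchar_injective (ξ : Fin N → ℂ) (hnz : ∀ i, ξ i ≠ 0)
    (hinj : Function.Injective ξ) : Function.Injective (bchar ξ hnz) := by
  intro σ σ' h
  refine Equiv.ext fun k => hinj ?_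
  rw [← bchar_single ξ hnz σ k, ← bchar_single ξ hnz σ' k, h]

end BetheAux


/-- **Classification of inadmissible Bethe ansatz solutions.**
For a solution `ξ` of the Bethe ansatz equations with all coordinates nonzero and
all denominators nonzero, the Bethe ansatz function `u_ξ` vanishes identically on
`ℤ^N` if and only if two of the coordinates of `ξ` coincide. -/
theorem betheU_eq_zero_iff_coincidence (L N : ℕ) (hL : 1 ≤ L) (hN : 2 ≤ N)
    (p q : ℂ) (hpq : p + q = 1) (ξ : Fin N → ℂ)
    (hnz : ∀ i, ξ i ≠ 0)
    (hpair : ∀ a b, a ≠ b → p + q * ξ a * ξ b - ξ b ≠ 0)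
    (hden : ∀ j i, p + q * ξ j * ξ i - ξ i ≠ 0)
    (hbethe : ∀ j, ξ j ^ L = (-1) ^ (N - 1) *
      ∏ i, (p + q * ξ j * ξ i - ξ j) / (p + q * ξ j * ξ i - ξ i)) :
    (∀ x : Fin N → ℤ, betheU p q ξ x = 0) ↔ ∃ i j, i ≠ j ∧ ξ i = ξ j := by
  classical
  constructor
  · intro h
    by_contra hcon
    push_neg at hcon
    have hinj : Function.Injective ξ := by
      intro a b hab
      by_contra hne
      exact hcon a b hne hab
    have hLI : LinearIndependent ℂ
        (fun σ : Equiv.Perm (Fin N) => ⇑(BetheAux.bchar ξ hnz σ)) :=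
      (linearIndependent_monoidHom (Multiplicative (Fin N → ℤ)) ℂ).comp
        (BetheAux.bchar ξ hnz) (BetheAux.bchar_injective ξ hnz hinj)
    have h0 : ∑ σ : Equiv.Perm (Fin N), betheAmp p q ξ σ •
        (⇑(BetheAux.bchar ξ hnz σ) : Multiplicative (Fin N → ℤ) → ℂ) = 0 := by
      funext m
      have hm := h (Multiplicative.toAdd m)
      rw [betheU] at hm
      simpa [BetheAux.bchar, Finset.sum_apply] using hm
    have hzero := Fintype.linearIndependent_iff.mp hLI _ h0 1
    rw [BetheAux.amp_one] at hzero
    exact one_ne_zero hzero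
  · rintro ⟨i, j, hne, hξ⟩ x
    rcases hne.lt_or_gt with hlt | hlt
    · exact BetheAux.u_swap_zero hpair hlt hξ x
    · exact BetheAux.u_swap_zero hpair hlt hξ.symm x
end

section
/- Let ξ_1, ξ_2 ∈ ℂ \ {0} and A, c ∈ ℂ. If ξ_1^{x_1} ξ_2^{x_2} + A · ξ_1^{x_2} ξ_2^{x_1} = c for all integers x_1, x_2 ∈ ℤ (integer powers of the nonzero complex numbers ξ_1, ξ_2), then ξ_1 = ξ_2. -/
/-- **Two-particle key step.** If the two-term exponential sum
`ξ₁^{x₁} ξ₂^{x₂} + A ξ₁^{x₂} ξ₂^{x₁}` (integer powers of nonzero complex numbers)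
is constant in `(x₁, x₂) ∈ ℤ²`, then `ξ₁ = ξ₂`. -/
theorem two_term_exponential_constant (ξ₁ ξ₂ : ℂ) (h₁ : ξ₁ ≠ 0) (h₂ : ξ₂ ≠ 0)
    (A c : ℂ)
    (h : ∀ x₁ x₂ : ℤ, ξ₁ ^ x₁ * ξ₂ ^ x₂ + A * (ξ₁ ^ x₂ * ξ₂ ^ x₁) = c) :
    ξ₁ = ξ₂ := by
  have h00 := h 0 0
  have h10 := h 1 0
  have h11 := h 1 1
  have hm10 := h (-1) 0
  simp [zpow_neg] at h00 h10 h11 hm10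
  -- h00 : 1 + A = c, h10 : ξ₁ + A * ξ₂ = c, h11 : ξ₁ * ξ₂ + A * (ξ₁ * ξ₂) = c
  -- hm10 : ξ₁⁻¹ + A * ξ₂⁻¹ = c
  by_cases hA : A = -1
  · subst hA
    have : c = 0 := by linear_combination -h00
    rw [this] at h10
    linear_combination h10
  · -- 1 + A = c ≠ 0 branch
    have hc : c = 1 + A := h00.symm
    subst hc
    have hA' : (1 : ℂ) + A ≠ 0 := by
      intro hz; apply hA; linear_combination hz
    have hprod : ξ₁ * ξ₂ = 1 := by
      have h' : (ξ₁ * ξ₂) * (1 + A) = 1 * (1 + A) := by linear_combination h11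
      exact mul_right_cancel₀ hA' h'
    -- ξ₂ = ξ₁⁻¹
    have hξ2 : ξ₂ = ξ₁⁻¹ := by
      field_simp
      linear_combination hprod
    subst hξ2
    -- equations: ξ₁ + A ξ₁⁻¹ = 1 + A ;  ξ₁⁻¹ + A ξ₁ = 1 + A
    have E1 : ξ₁ ^ 2 + A = (1 + A) * ξ₁ := by
      have := h10
      field_simp at this
      linear_combination this
    have E2 : 1 + A * ξ₁ ^ 2 = (1 + A) * ξ₁ := by
      have := hm10
      field_simp at this
      linear_combination this
    -- (ξ₁-1)(ξ₁-A)=0 and (ξ₁-1)(Aξ₁-1)=0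
    have F1 : (ξ₁ - 1) * (ξ₁ - A) = 0 := by linear_combination E1
    have F2 : (ξ₁ - 1) * (A * ξ₁ - 1) = 0 := by linear_combination E2
    rcases mul_eq_zero.mp F1 with hx | hx
    · have : ξ₁ = 1 := by linear_combination hx
      rw [this]; simp
    · have hxA : ξ₁ = A := by linear_combination hx
      rcases mul_eq_zero.mp F2 with hy | hy
      · have : ξ₁ = 1 := by linear_combination hy
        rw [this]; simp
      · have hsq : (ξ₁ - 1) * (ξ₁ + 1) = 0 := by
          linear_combination hy + ξ₁ * hx
        rcases mul_eq_zero.mp hsq with hz | hz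
        · have : ξ₁ = 1 := by linear_combination hz
          rw [this]; simp
        · exfalso
          apply hA
          have : ξ₁ = -1 := by linear_combination hz
          rw [this] at hxA
          linear_combination -hxA
end
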